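/- Let (R, 𝔪) be a complete discrete valuation ring with fraction field K of characteristic 0 and residue field k of characteristic p > 0. Let a_1,...,a_n be positive integers with p ∤ a_1···a_{n-1}, and let x̄_1,...,x̄_{n-1} ∈ k^* be pairwise distinct, also distinct from 1, such that ∑_{i=1}^{n-1} a_i x̄_i^m + a_n = 0 in k for m = 1,...,n-1. Assume p ∤ (n-1)!. Then there exist unique x_1,...,x_{n-1} ∈ R lifting the x̄_i and satisfying ∑_{i=1}^{n-1} a_i x_i^m + a_n = 0 in K for m = 1,...,n-1. -/

import Mathlib

open Finset IsLocalRing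


section Aux
variable {R : Type*} [CommRing R]

private theorem taylor_pow (x h : R) : ∀ m : ℕ, ∃ c, (x + h) ^ (m + 1)
    = x ^ (m + 1) + ((m + 1 : ℕ) : R) * x ^ m * h + h ^ 2 * c
  | 0 => ⟨0, by ring⟩
  | (m + 1) => by
    obtain ⟨c, hc⟩ := taylor_pow x h m
    refine ⟨x * c + ((m + 1 : ℕ) : R) * x ^ m + h * c, ?_⟩
    have h2 : (x + h) ^ (m + 1 + 1) = (x + h) * (x + h) ^ (m + 1) := by ring
    rw [h2, hc]
    push_cast
    ring

variable {N : ℕ}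

private def Fv (a : Fin N → ℕ) (aN : ℕ) (x : Fin N → R) (r : Fin N) : R :=
  ∑ i, (a i : R) * x i ^ ((r : ℕ) + 1) + (aN : R)

private def Jm (a : Fin N → ℕ) (x : Fin N → R) : Matrix (Fin N) (Fin N) R :=
  Matrix.of fun r i => (((r : ℕ) + 1 : ℕ) : R) * (a i : R) * x i ^ (r : ℕ)

private theorem taylorF (a : Fin N → ℕ) (aN : ℕ) (x h : Fin N → R) (r : Fin N) :
    ∃ c : Fin N → R, Fv a aN (x + h) r
      = Fv a aN x r + (Jm a x).mulVec h r + ∑ i, h i ^ 2 * c i := by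
  choose c hc using fun i => taylor_pow (x i) (h i) (r : ℕ)
  refine ⟨fun i => (a i : R) * c i, ?_⟩
  simp only [Fv, Jm, Matrix.mulVec, dotProduct, Pi.add_apply, Matrix.of_apply]
  have e : ∀ i : Fin N, (a i : R) * (x i + h i) ^ ((r : ℕ) + 1)
      = (a i : R) * x i ^ ((r : ℕ) + 1)
        + ((((r : ℕ) + 1 : ℕ) : R) * (a i : R) * x i ^ (r : ℕ)) * h i
        + h i ^ 2 * ((a i : R) * c i) := by
    intro i; rw [hc i]; push_cast; ring
  rw [Finset.sum_congr rfl fun i _ => e i, Finset.sum_add_distrib, Finset.sum_add_distrib]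
  ring

private theorem taylorF_dvd (a : Fin N → ℕ) (aN : ℕ) (x h : Fin N → R) (π : R) (k : ℕ)
    (hh : ∀ i, π ^ k ∣ h i) (r : Fin N) :
    π ^ (2 * k) ∣ Fv a aN (x + h) r - Fv a aN x r - (Jm a x).mulVec h r := by
  obtain ⟨c, hc⟩ := taylorF a aN x h r
  have e : Fv a aN (x + h) r - Fv a aN x r - (Jm a x).mulVec h r = ∑ i, h i ^ 2 * c i := by
    rw [hc]; ring
  rw [e]
  refine Finset.dvd_sum fun i _ => dvd_mul_of_dvd_left ?_ _
  rw [two_mul, pow_add, sq]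
  exact mul_dvd_mul (hh i) (hh i)

private theorem dvd_mulVec {d : R} (M : Matrix (Fin N) (Fin N) R) (v : Fin N → R)
    (hv : ∀ i, d ∣ v i) (r : Fin N) : d ∣ M.mulVec v r := by
  simp only [Matrix.mulVec, dotProduct]
  exact Finset.dvd_sum fun i _ => (hv i).mul_left _

private theorem dvd_of_mulVec_dvd {d : R} {M : Matrix (Fin N) (Fin N) R} (hM : IsUnit M.det)
    {v : Fin N → R} (hv : ∀ r, d ∣ M.mulVec v r) (i : Fin N) : d ∣ v i := by
  letI := M.invertibleOfIsUnitDet hM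
  have h : v = (⅟M).mulVec (M.mulVec v) := by
    rw [Matrix.mulVec_mulVec, invOf_mul_self, Matrix.one_mulVec]
  rw [show v i = (⅟M).mulVec (M.mulVec v) i from congrFun h i]
  exact dvd_mulVec _ _ hv i

private theorem det_Jm_unit {R : Type*} [CommRing R] [IsLocalRing R] {N : ℕ}
    (a : Fin N → ℕ) (x : Fin N → R) (xb : Fin N → ResidueField R)
    (hx : ∀ i, residue R (x i) = xb i) (hinj : Function.Injective xb)
    (hfac : ((N.factorial : ℕ) : ResidueField R) ≠ 0)
    (hprod : ((∏ i, a i : ℕ) : ResidueField R) ≠ 0) :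
    IsUnit (Jm a x).det := by
  rw [← IsLocalRing.notMem_maximalIdeal]
  intro hmem
  have h0 : residue R (Jm a x).det = 0 := Ideal.Quotient.eq_zero_iff_mem.mpr hmem
  rw [RingHom.map_det] at h0
  have hJb : (residue R).mapMatrix (Jm a x)
      = Matrix.diagonal (fun r : Fin N => (((r : ℕ) + 1 : ℕ) : ResidueField R))
        * (Matrix.vandermonde xb).transpose
        * Matrix.diagonal (fun i => ((a i : ℕ) : ResidueField R)) := by
    ext r i
    simp only [RingHom.mapMatrix_apply, Matrix.map_apply, Jm, Matrix.of_apply,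
      Matrix.mul_diagonal, Matrix.diagonal_mul, Matrix.transpose_apply, Matrix.vandermonde_apply,
      map_mul, map_pow, map_natCast, hx]
    ring
  rw [hJb, Matrix.det_mul, Matrix.det_mul, Matrix.det_diagonal, Matrix.det_diagonal,
    Matrix.det_transpose, Matrix.det_vandermonde] at h0
  have h1 : (∏ r : Fin N, (((r : ℕ) + 1 : ℕ) : ResidueField R)) = ((N.factorial : ℕ) : ResidueField R) := by
    rw [← Nat.cast_prod]
    congr 1
    rw [Fin.prod_univ_eq_prod_range (fun r => r + 1), Finset.prod_range_add_one_eq_factorial]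
  have h2 : (∏ i : Fin N, ((a i : ℕ) : ResidueField R)) = ((∏ i, a i : ℕ) : ResidueField R) := by
    rw [Nat.cast_prod]
  rw [h1, h2] at h0
  rcases mul_eq_zero.mp h0 with h | h
  · rcases mul_eq_zero.mp h with h | h
    · exact hfac h
    · rw [Finset.prod_eq_zero_iff] at h
      obtain ⟨i, _, h⟩ := h
      rw [Finset.prod_eq_zero_iff] at h
      obtain ⟨j, hj, h⟩ := h
      exact absurd (hinj (sub_eq_zero.mp h)).symm (Finset.mem_Ioi.mp hj).ne
  · exact hprod h

end Aux

private theorem haus_helper {R : Type*} [CommRing R] [IsDomain R] [IsDiscreteValuationRing R]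
    [IsAdicComplete (maximalIdeal R) R] {π : R} (hπ : Irreducible π)
    (z : R) (hz : ∀ k : ℕ, π ^ k ∣ z) : z = 0 := by
  refine (IsAdicComplete.toIsHausdorff : IsHausdorff (maximalIdeal R) R).haus z fun k => ?_
  rw [SModEq.sub_mem, sub_zero, smul_eq_mul, Ideal.mul_top, hπ.maximalIdeal_eq,
    Ideal.span_singleton_pow, Ideal.mem_span_singleton]
  exact hz k

private theorem prec_helper {R : Type*} [CommRing R] [IsDomain R] [IsDiscreteValuationRing R]
    [IsAdicComplete (maximalIdeal R) R] {π : R} (hπ : Irreducible π)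
    (f : ℕ → R) (hf : ∀ m n : ℕ, m ≤ n → π ^ m ∣ f n - f m) :
    ∃ L, ∀ k, π ^ k ∣ L - f k := by
  obtain ⟨L, hL⟩ := (IsAdicComplete.toIsPrecomplete : IsPrecomplete (maximalIdeal R) R).prec
    (f := f) (by
      intro m n hmn
      rw [SModEq.sub_mem, smul_eq_mul, Ideal.mul_top, hπ.maximalIdeal_eq,
        Ideal.span_singleton_pow, Ideal.mem_span_singleton, ← neg_sub, dvd_neg]
      exact hf m n hmn)
  refine ⟨L, fun k => ?_⟩
  have h := hL k
  rw [SModEq.sub_mem, smul_eq_mul, Ideal.mul_top, hπ.maximalIdeal_eq,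
    Ideal.span_singleton_pow, Ideal.mem_span_singleton, ← neg_sub, dvd_neg] at h
  exact h

/-- Proposition 6.1 (lifting normalized models): let `R` be a complete discrete
valuation ring whose fraction field has characteristic `0` and whose residue
field has characteristic `p > 0`. Given positive integers `a₁, …, aₙ` with
`p ∤ a₁⋯a_{n-1}` and `p ∤ (n-1)!`, and pairwise distinct elements
`x̄₁, …, x̄_{n-1}` of the residue field, nonzero and distinct from `1`, satisfying
`∑_{i<n} aᵢ x̄ᵢ^m + aₙ = 0` for `m = 1, …, n-1`, there exist unique lifts
`x₁, …, x_{n-1} ∈ R` satisfying the same equations. -/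
theorem stmt11 {R : Type*} [CommRing R] [IsDomain R] [IsDiscreteValuationRing R]
    [IsAdicComplete (maximalIdeal R) R]
    [CharZero (FractionRing R)]
    (p : ℕ) (hp : p.Prime) [CharP (ResidueField R) p]
    (n : ℕ) (hn : 2 ≤ n)
    (a : Fin (n - 1) → ℕ) (ha : ∀ i, 0 < a i) (aN : ℕ) (haN : 0 < aN)
    (hpa : ¬ p ∣ ∏ i, a i) (hpfac : ¬ p ∣ (n - 1).factorial)
    (xb : Fin (n - 1) → ResidueField R)
    (hxb0 : ∀ i, xb i ≠ 0) (hxb1 : ∀ i, xb i ≠ 1) (hxb : Function.Injective xb)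
    (heq : ∀ m ∈ Finset.Icc 1 (n - 1), ∑ i, (a i : ResidueField R) * xb i ^ m + aN = 0) :
    ∃! x : Fin (n - 1) → R,
      (∀ i, residue R (x i) = xb i) ∧
      ∀ m ∈ Finset.Icc 1 (n - 1), ∑ i, (a i : R) * x i ^ m + aN = 0 := by
  obtain ⟨π, hπ⟩ := IsDiscreteValuationRing.exists_irreducible R
  have hres0 : ∀ z : R, residue R z = 0 ↔ π ∣ z := fun z => by
    rw [show (residue R z = 0) ↔ z ∈ maximalIdeal R from Ideal.Quotient.eq_zero_iff_mem,
      hπ.maximalIdeal_eq, Ideal.mem_span_singleton]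
  have hfac : (((n - 1).factorial : ℕ) : ResidueField R) ≠ 0 := fun h =>
    hpfac ((CharP.cast_eq_zero_iff (ResidueField R) p _).mp h)
  have hprod : ((∏ i, a i : ℕ) : ResidueField R) ≠ 0 := fun h =>
    hpa ((CharP.cast_eq_zero_iff (ResidueField R) p _).mp h)
  have hdet : ∀ x : Fin (n - 1) → R, (∀ i, residue R (x i) = xb i) → IsUnit (Jm a x).det :=
    fun x hx => det_Jm_unit a x xb hx hxb hfac hprod
  have heqF : ∀ r : Fin (n - 1), Fv a aN xb r = 0 := by
    intro r
    have hr : (r : ℕ) + 1 ∈ Finset.Icc 1 (n - 1) := by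
      have := r.isLt; rw [Finset.mem_Icc]; omega
    simpa [Fv] using heq _ hr
  have hresF : ∀ (x : Fin (n - 1) → R) r,
      residue R (Fv a aN x r) = Fv a aN (fun i => residue R (x i)) r := by
    intro x r
    simp [Fv, map_sum, map_mul, map_pow, map_natCast]
  -- lift of xb
  choose x₀ hx₀ using fun i => IsLocalRing.residue_surjective (R := R) (xb i)
  letI instInv : Invertible (Jm a x₀) := (Jm a x₀).invertibleOfIsUnitDet (hdet x₀ hx₀)
  set seq : ℕ → Fin (n - 1) → R :=
    fun k => Nat.rec x₀ (fun _ xk => xk - (⅟(Jm a x₀)).mulVec (Fv a aN xk)) k with hseq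
  have hseqsucc : ∀ k, seq (k + 1) = seq k - (⅟(Jm a x₀)).mulVec (Fv a aN (seq k)) :=
    fun k => rfl
  have key : ∀ k, (∀ r, π ^ (k + 1) ∣ Fv a aN (seq k) r) ∧ (∀ i, π ∣ seq k i - x₀ i) := by
    intro k
    induction k with
    | zero =>
      refine ⟨fun r => ?_, fun i => by simp [hseq]⟩
      have h0 : residue R (Fv a aN (seq 0) r) = 0 := by
        rw [hresF]
        have he : (fun i => residue R (seq 0 i)) = xb := funext hx₀
        rw [he]; exact heqF r
      simpa [pow_one] using (hres0 _).mp h0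
    | succ k ih =>
      have hsub : ∀ i, seq (k + 1) i - seq k i
          = -((⅟(Jm a x₀)).mulVec (Fv a aN (seq k)) i) := by
        intro i; rw [hseqsucc]; simp
      have hw2 : ∀ i, π ^ (k + 1) ∣ seq (k + 1) i - seq k i := by
        intro i
        rw [hsub i, dvd_neg]
        exact dvd_mulVec _ _ (fun r => ih.1 r) i
      constructor
      · intro r
        have hT := taylorF_dvd a aN (seq k) (fun i => seq (k + 1) i - seq k i) π (k + 1) hw2 r
        rw [show (seq k + fun i => seq (k + 1) i - seq k i) = seq (k + 1) from
          by funext i; simp] at hT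
        obtain ⟨t, ht⟩ := hT
        have hJ0 : (Jm a x₀).mulVec (fun i => seq (k + 1) i - seq k i)
            = fun r => -(Fv a aN (seq k) r) := by
          have he : (fun i => seq (k + 1) i - seq k i)
              = -((⅟(Jm a x₀)).mulVec (Fv a aN (seq k))) := funext hsub
          rw [he, Matrix.mulVec_neg, Matrix.mulVec_mulVec, mul_invOf_self, Matrix.one_mulVec]
          rfl
        have hMs : (Jm a (seq k)).mulVec (fun i => seq (k + 1) i - seq k i) r
            = ((Jm a (seq k)) - (Jm a x₀)).mulVec (fun i => seq (k + 1) i - seq k i) r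
              - Fv a aN (seq k) r := by
          rw [Matrix.sub_mulVec]
          have := congrFun hJ0 r
          simp only [Pi.sub_apply, this]
          ring
        have e : Fv a aN (seq (k + 1)) r = π ^ (2 * (k + 1)) * t
            + ((Jm a (seq k)) - (Jm a x₀)).mulVec (fun i => seq (k + 1) i - seq k i) r := by
          linear_combination ht + hMs
        rw [e]
        refine dvd_add (dvd_trans (pow_dvd_pow π (by omega)) ⟨t, rfl⟩) ?_
        have hmv : ((Jm a (seq k)) - (Jm a x₀)).mulVec (fun i => seq (k + 1) i - seq k i) r
            = ∑ i, ((Jm a (seq k)) - (Jm a x₀)) r i * (seq (k + 1) i - seq k i) := rfl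
        rw [hmv]
        refine Finset.dvd_sum fun i _ => ?_
        rw [show π ^ (k + 1 + 1) = π * π ^ (k + 1) from by ring]
        refine mul_dvd_mul ?_ (hw2 i)
        have hent : ((Jm a (seq k)) - (Jm a x₀)) r i
            = (((r : ℕ) + 1 : ℕ) : R) * (a i : R) * (seq k i ^ (r : ℕ) - x₀ i ^ (r : ℕ)) := by
          simp [Jm]; ring
        rw [hent]
        exact Dvd.dvd.mul_left ((ih.2 i).trans (sub_dvd_pow_sub_pow _ _ _)) _
      · intro i
        have h1 := dvd_add (dvd_trans (dvd_pow_self π (Nat.succ_ne_zero k)) (hw2 i)) (ih.2 i)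
        simpa [sub_add_sub_cancel] using h1
  have hstep : ∀ k i, π ^ (k + 1) ∣ seq (k + 1) i - seq k i := by
    intro k i
    have hsub : seq (k + 1) i - seq k i = -((⅟(Jm a x₀)).mulVec (Fv a aN (seq k)) i) := by
      rw [hseqsucc]; simp
    rw [hsub, dvd_neg]
    exact dvd_mulVec _ _ (fun r => (key k).1 r) i
  have hcauchy : ∀ m n' : ℕ, m ≤ n' → ∀ i, π ^ m ∣ seq n' i - seq m i := by
    intro m n' hmn i
    induction n', hmn using Nat.le_induction with
    | base => simp
    | succ n' hmn ih =>
      have he : seq (n' + 1) i - seq m i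
          = (seq (n' + 1) i - seq n' i) + (seq n' i - seq m i) := by ring
      rw [he]
      exact dvd_add (dvd_trans (pow_dvd_pow π (by omega)) (hstep n' i)) ih
  choose L hL using fun i => prec_helper hπ (fun k => seq k i)
    (fun m n' hmn => hcauchy m n' hmn i)
  have hLres : ∀ i, residue R (L i) = xb i := by
    intro i
    have h1 : π ∣ L i - x₀ i := by
      have h2 : L i - x₀ i = (L i - seq 1 i) + (seq 1 i - seq 0 i) := by
        show L i - x₀ i = (L i - seq 1 i) + (seq 1 i - x₀ i); ring
      rw [h2]
      exact dvd_add (by simpa using hL i 1) (by simpa using hstep 0 i)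
    have h3 : residue R (L i - x₀ i) = 0 := (hres0 _).mpr h1
    rw [map_sub, sub_eq_zero] at h3
    rw [h3, hx₀ i]
  have hLeq : ∀ r, Fv a aN L r = 0 := by
    intro r
    refine haus_helper hπ _ fun k => ?_
    have hh : ∀ i, π ^ k ∣ L i - seq k i := fun i => hL i k
    have hT := taylorF_dvd a aN (seq k) (fun i => L i - seq k i) π k hh r
    rw [show (seq k + fun i => L i - seq k i) = L from by funext i; simp] at hT
    obtain ⟨t, ht⟩ := hT
    have e : Fv a aN L r = π ^ (2 * k) * t + Fv a aN (seq k) r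
        + (Jm a (seq k)).mulVec (fun i => L i - seq k i) r := by linear_combination ht
    rw [e]
    exact dvd_add (dvd_add (dvd_trans (pow_dvd_pow π (by omega)) ⟨t, rfl⟩)
      (dvd_trans (pow_dvd_pow π (Nat.le_succ k)) ((key k).1 r))) (dvd_mulVec _ _ hh r)
  have huniq : ∀ y z : Fin (n - 1) → R, (∀ i, residue R (y i) = xb i) →
      (∀ r, Fv a aN y r = 0) → (∀ i, residue R (z i) = xb i) →
      (∀ r, Fv a aN z r = 0) → y = z := by
    intro y z hyres hyeq hzres hzeq
    have main : ∀ k, ∀ i, π ^ (k + 1) ∣ z i - y i := by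
      intro k
      induction k with
      | zero =>
        intro i
        rw [pow_one, ← hres0, map_sub, hzres i, hyres i, sub_self]
      | succ k ih =>
        have hdvd : ∀ r, π ^ (k + 2) ∣ (Jm a y).mulVec (fun i => z i - y i) r := by
          intro r
          have h1 := taylorF_dvd a aN y (fun i => z i - y i) π (k + 1) ih r
          rw [show (y + fun i => z i - y i) = z from by funext i; simp] at h1
          rw [hzeq r, hyeq r] at h1
          rw [show (0 : R) - 0 - (Jm a y).mulVec (fun i => z i - y i) r
            = -((Jm a y).mulVec (fun i => z i - y i) r) from by ring, dvd_neg] at h1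
          exact dvd_trans (pow_dvd_pow π (by omega)) h1
        exact fun i => dvd_of_mulVec_dvd (hdet y hyres) hdvd i
    funext i
    have h0 : z i - y i = 0 := haus_helper hπ _
      fun k => dvd_trans (pow_dvd_pow π (Nat.le_succ k)) (main k i)
    exact (sub_eq_zero.mp h0).symm
  have convR : ∀ (x : Fin (n - 1) → R), (∀ r, Fv a aN x r = 0) →
      ∀ m ∈ Finset.Icc 1 (n - 1), ∑ i, (a i : R) * x i ^ m + aN = 0 := by
    intro x hx m hm
    rw [Finset.mem_Icc] at hm
    have hlt : m - 1 < n - 1 := by omega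
    have h1 := hx ⟨m - 1, hlt⟩
    simp only [Fv] at h1
    rwa [show ((⟨m - 1, hlt⟩ : Fin (n - 1)) : ℕ) + 1 = m from by simp; omega] at h1
  have convL : ∀ (x : Fin (n - 1) → R),
      (∀ m ∈ Finset.Icc 1 (n - 1), ∑ i, (a i : R) * x i ^ m + aN = 0) →
      ∀ r, Fv a aN x r = 0 := by
    intro x hx r
    have hr : (r : ℕ) + 1 ∈ Finset.Icc 1 (n - 1) := by
      have := r.isLt; rw [Finset.mem_Icc]; omega
    simpa [Fv] using hx _ hr
  refine ⟨L, ⟨hLres, convR L hLeq⟩, ?_⟩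
  intro y hy
  exact huniq y L hy.1 (convL y hy.2) hLres hLeq
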